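/- For any T₀ space X, a subset U ⊆ X is SI₂-open if and only if for every net (x_i) and every x ∈ U with (x_i) GSI₂-converging to x, x_i ∈ U eventually. That is, the topology induced by GSI₂-convergence coincides with the SI₂-topology. -/

import Mathlib

open Set

/-- Specialization order: `x ≤ y` iff `x ∈ cl {y}`. -/
def specLE {X : Type} [TopologicalSpace X] (x y : X) : Prop := x ∈ closure {y}

/-- Upward closure w.r.t. the specialization order. -/
def upClosure {X : Type} [TopologicalSpace X] (A : Set X) : Set X :=
  {y | ∃ a ∈ A, specLE a y}

/-- The underlying set of the Smyth power space: nonempty compact saturated subsets. -/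
def SmythPS (X : Type) [TopologicalSpace X] : Type :=
  {K : Set X // K.Nonempty ∧ IsCompact K ∧ ∀ x ∈ K, ∀ y, specLE x y → y ∈ K}

/-- `□U = {K ∈ Q(X) : K ⊆ U}`. -/
def boxU {X : Type} [TopologicalSpace X] (U : Set X) : Set (SmythPS X) :=
  {K : SmythPS X | K.1 ⊆ U}

/-- The upper Vietoris topology on the Smyth power space. -/
instance smythTop (X : Type) [TopologicalSpace X] : TopologicalSpace (SmythPS X) :=
  TopologicalSpace.generateFrom {S : Set (SmythPS X) | ∃ U : Set X, IsOpen U ∧ S = boxU U}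

/-- The cut `A^δ = (A^↑)^↓` w.r.t. the specialization order. -/
def cutD {X : Type} [TopologicalSpace X] (A : Set X) : Set X :=
  {x | ∀ u : X, (∀ a ∈ A, specLE a u) → specLE x u}

/-- `U` is SI₂-open. -/
def SI2Open {X : Type} [TopologicalSpace X] (U : Set X) : Prop :=
  IsOpen U ∧ ∀ F : Set X, IsIrreducible F → (cutD F ∩ U).Nonempty → (F ∩ U).Nonempty

/-- `le` makes `I` the index of a net: nonempty, reflexive, transitive, directed. -/
def IsNetOrder {I : Type} (le : I → I → Prop) : Prop :=
  Nonempty I ∧ (∀ i, le i i) ∧ (∀ i j k, le i j → le j k → le i k) ∧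
    (∀ i j, ∃ k, le i k ∧ le j k)

/-- GSI₂-convergence of the net `xi` (indexed by `(I, le)`) to `x`. -/
def GSI2Conv {X : Type} [TopologicalSpace X] {I : Type} (le : I → I → Prop)
    (xi : I → X) (x : X) : Prop :=
  ∃ 𝒢 : Set (Set X), (∀ G ∈ 𝒢, G.Finite ∧ G.Nonempty) ∧
    IsIrreducible {K : SmythPS X | ∃ G ∈ 𝒢, K.1 = upClosure G} ∧
    (∀ U : Set X, IsOpen U → (∃ G ∈ 𝒢, upClosure G ⊆ U) →
      ∃ i₀, ∀ i, le i₀ i → xi i ∈ U) ∧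
    (⋂ G ∈ 𝒢, upClosure G) ⊆ upClosure {x}

/-- `A ≪_{I₂} B`. -/
def WayBelowI2 {X : Type} [TopologicalSpace X] (A B : Set X) : Prop :=
  ∀ D : Set X, IsIrreducible D → (cutD D ∩ B).Nonempty → (A ∩ closure D).Nonempty

/-- `w(x) = {↑F : F nonempty finite, F ≪_{I₂} x}` as a subset of the Smyth power space. -/
def wPS {X : Type} [TopologicalSpace X] (x : X) : Set (SmythPS X) :=
  {K : SmythPS X | ∃ F : Set X, F.Finite ∧ F.Nonempty ∧ WayBelowI2 F {x} ∧ K.1 = upClosure F}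

/-- QI₂-continuity. -/
def QI2Continuous (X : Type) [TopologicalSpace X] : Prop :=
  ∀ x : X, IsIrreducible (wPS x) ∧ upClosure {x} = ⋂ K ∈ wPS x, (K.1 : Set X)

/-- Strong QI₂-continuity. -/
def StronglyQI2Continuous (X : Type) [TopologicalSpace X] : Prop :=
  QI2Continuous X ∧
  ∀ (F : Set X) (x : X) (U : Set X), F.Finite → F.Nonempty → WayBelowI2 F {x} →
    IsOpen U → F ⊆ U → ∃ W : Set X, SI2Open W ∧ x ∈ W ∧ W ⊆ U


section Aux

variable {X : Type} [TopologicalSpace X]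

lemma specLE_refl' (a : X) : specLE a a := subset_closure rfl

lemma specLE_trans' {a b c : X} (h1 : specLE a b) (h2 : specLE b c) : specLE a c :=
  closure_minimal (Set.singleton_subset_iff.2 h2) isClosed_closure h1

lemma open_upper' {V : Set X} (hV : IsOpen V) {a y : X} (ha : a ∈ V) (h : specLE a y) : y ∈ V := by
  have := (mem_closure_iff.1 h) V hV ha
  simpa using this

lemma subset_upClosure' (G : Set X) : G ⊆ upClosure G := fun a ha => ⟨a, ha, specLE_refl' a⟩

lemma upClosure_subset' {G V : Set X} (hV : IsOpen V) (h : G ⊆ V) : upClosure G ⊆ V := by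
  rintro y ⟨a, ha, hle⟩; exact open_upper' hV (h ha) hle

lemma upClosure_upper' {G : Set X} {a y : X} (ha : a ∈ upClosure G) (h : specLE a y) :
    y ∈ upClosure G := by
  obtain ⟨g, hg, hga⟩ := ha; exact ⟨g, hg, specLE_trans' hga h⟩

lemma isCompact_up_singleton' (a : X) : IsCompact (upClosure ({a} : Set X)) := by
  apply isCompact_of_finite_subcover
  intro ι Uo hUo hcov
  have ha : a ∈ upClosure ({a} : Set X) := subset_upClosure' _ rfl
  obtain ⟨i, hi⟩ := mem_iUnion.1 (hcov ha)
  refine ⟨{i}, ?_⟩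
  simpa using upClosure_subset' (hUo i) (Set.singleton_subset_iff.2 hi)

lemma isCompact_upClosure' {G : Set X} (hG : G.Finite) : IsCompact (upClosure G) := by
  have h : upClosure G = ⋃ a ∈ G, upClosure {a} := by
    ext y; simp [upClosure]
  rw [h]
  exact hG.isCompact_biUnion (fun a _ => isCompact_up_singleton' a)

/-- Element of the Smyth power space from a nonempty finite set. -/
def mkK (G : Set X) (hf : G.Finite) (hn : G.Nonempty) : SmythPS X :=
  ⟨upClosure G, hn.mono (subset_upClosure' G), isCompact_upClosure' hf,
   fun _ hx _ hy => upClosure_upper' hx hy⟩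

lemma isOpen_boxU' {V : Set X} (hV : IsOpen V) : IsOpen (boxU V) :=
  TopologicalSpace.GenerateOpen.basic _ ⟨V, hV, rfl⟩

/-- The unit of the Smyth power space monad. -/
def etaPS (x : X) : SmythPS X :=
  ⟨upClosure {x}, ⟨x, subset_upClosure' _ rfl⟩, isCompact_upClosure' (Set.finite_singleton x),
   fun _ ha _ hy => upClosure_upper' ha hy⟩

lemma continuous_etaPS : Continuous (etaPS : X → SmythPS X) := by
  rw [show (smythTop X) = TopologicalSpace.generateFrom
      {S : Set (SmythPS X) | ∃ U : Set X, IsOpen U ∧ S = boxU U} from rfl] at *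
  refine continuous_generateFrom_iff.2 ?_
  rintro S ⟨V, hV, rfl⟩
  have h : etaPS ⁻¹' (boxU V) = V := by
    ext a
    constructor
    · intro h; exact h (subset_upClosure' _ rfl)
    · intro h; exact upClosure_subset' hV (Set.singleton_subset_iff.2 h)
  rw [show etaPS ⁻¹' (boxU V) = V from h]
  exact hV

lemma finite_chain_min' {c : Set (Set X)} (hc : IsChain (· ⊆ ·) c) {b : Set (Set X)}
    (hb : b ⊆ c) (hfin : b.Finite) (hne : b.Nonempty) : ∃ B₀ ∈ b, ∀ B ∈ b, B₀ ⊆ B := by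
  obtain ⟨B₀, hB₀, hmin⟩ : ∃ B₀ ∈ b, ∀ B ∈ b, id B ⊆ id B₀ → id B₀ = id B := by
    obtain ⟨B₀, hB₀, hm⟩ := hfin.exists_minimalFor id b hne
    exact ⟨B₀, hB₀, fun B hB h => subset_antisymm (hm hB h) h⟩
  refine ⟨B₀, hB₀, fun B hB => ?_⟩
  rcases eq_or_ne B B₀ with rfl | hBne
  · exact subset_rfl
  · rcases hc (hb hB) (hb hB₀) hBne with h | h
    · exact le_of_eq (hmin B hB h)
    · exact h

/-- Topological Rudin lemma for the Smyth power space. -/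
lemma rudin' {𝒦 : Set (SmythPS X)} (h𝒦 : IsIrreducible 𝒦)
    {A : Set X} (hA : IsClosed A) (hmeet : ∀ K ∈ 𝒦, (K.1 ∩ A).Nonempty) :
    ∃ B, B ⊆ A ∧ IsIrreducible B ∧ ∀ K ∈ 𝒦, (K.1 ∩ B).Nonempty := by
  set S : Set (Set X) := {B | IsClosed B ∧ B ⊆ A ∧ ∀ K ∈ 𝒦, (K.1 ∩ B).Nonempty} with hS
  have hchain : ∀ c ⊆ S, IsChain (· ⊆ ·) c → c.Nonempty →
      ∃ lb ∈ S, ∀ s ∈ c, lb ⊆ s := by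
    intro c hcS hcchain hcne
    refine ⟨⋂₀ c, ⟨isClosed_sInter (fun B hB => (hcS hB).1), ?_, ?_⟩,
      fun s hs => Set.sInter_subset_of_mem hs⟩
    · obtain ⟨B₀, hB₀⟩ := hcne
      exact (Set.sInter_subset_of_mem hB₀).trans (hcS hB₀).2.1
    · intro K hK
      by_contra hemp
      have hcov : K.1 ⊆ ⋃ B ∈ c, Bᶜ := by
        intro y hy
        by_contra hy'
        simp only [Set.mem_iUnion, Set.mem_compl_iff, not_exists, not_not] at hy'
        exact hemp ⟨y, hy, fun B hB => hy' B hB⟩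
      obtain ⟨b', hb'c, hb'fin, hb'cov⟩ := K.2.2.1.elim_finite_subcover_image
        (fun B hB => (hcS hB).1.isOpen_compl) hcov
      rcases b'.eq_empty_or_nonempty with rfl | hb'ne
      · obtain ⟨y, hy⟩ := K.2.1
        simpa using hb'cov hy
      · obtain ⟨B₀, hB₀, hmin⟩ := finite_chain_min' hcchain hb'c hb'fin hb'ne
        have hsub : K.1 ⊆ B₀ᶜ := by
          refine hb'cov.trans ?_
          exact Set.iUnion₂_subset fun B hB => Set.compl_subset_compl.2 (hmin B hB)
        obtain ⟨y, hy1, hy2⟩ := (hcS (hb'c hB₀)).2.2 K hK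
        exact hsub hy1 hy2
  obtain ⟨m, -, hmS, hmmin⟩ := zorn_superset_nonempty S hchain A ⟨hA, subset_rfl, hmeet⟩
  refine ⟨m, hmS.2.1, ⟨?_, ?_⟩, hmS.2.2⟩
  · obtain ⟨K, hK⟩ := h𝒦.1
    exact (hmS.2.2 K hK).mono Set.inter_subset_right
  · rw [isPreirreducible_iff_isClosed_union_isClosed]
    intro z₁ z₂ hz₁ hz₂ hsub
    by_contra hcon
    push_neg at hcon
    obtain ⟨hns₁, hns₂⟩ := hcon
    have hnot : ∀ z : Set X, IsClosed z → ¬(m ⊆ z) →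
        ∃ K ∈ 𝒦, K.1 ∩ (m ∩ z) = ∅ := by
      intro z hz hmz
      by_contra hall
      push_neg at hall
      have hmem : m ∩ z ∈ S := by
        refine ⟨hmS.1.inter hz, Set.inter_subset_left.trans hmS.2.1, ?_⟩
        intro K hK
        exact hall K hK
      have := hmmin hmem Set.inter_subset_left
      exact hmz (this.trans Set.inter_subset_right)
    obtain ⟨K₁, hK₁, hK₁e⟩ := hnot z₁ hz₁ hns₁
    obtain ⟨K₂, hK₂, hK₂e⟩ := hnot z₂ hz₂ hns₂
    have hO₁ : K₁ ∈ boxU (m ∩ z₁)ᶜ := by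
      intro y hy
      simp only [Set.mem_compl_iff]
      intro hy'
      exact Set.eq_empty_iff_forall_notMem.1 hK₁e y ⟨hy, hy'⟩
    have hO₂ : K₂ ∈ boxU (m ∩ z₂)ᶜ := by
      intro y hy
      simp only [Set.mem_compl_iff]
      intro hy'
      exact Set.eq_empty_iff_forall_notMem.1 hK₂e y ⟨hy, hy'⟩
    obtain ⟨K, hK𝒦, hKO₁, hKO₂⟩ := h𝒦.2 (boxU (m ∩ z₁)ᶜ) (boxU (m ∩ z₂)ᶜ)
      (isOpen_boxU' (hmS.1.inter hz₁).isOpen_compl)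
      (isOpen_boxU' (hmS.1.inter hz₂).isOpen_compl)
      ⟨K₁, hK₁, hO₁⟩ ⟨K₂, hK₂, hO₂⟩
    obtain ⟨y, hyK, hym⟩ := hmS.2.2 K hK𝒦
    rcases hsub hym with hy1 | hy2
    · exact hKO₁ hyK ⟨hym, hy1⟩
    · exact hKO₂ hyK ⟨hym, hy2⟩

end Aux

theorem stmt13 {X : Type} [TopologicalSpace X] [T0Space X] (U : Set X) :
    SI2Open U ↔
      ∀ (I : Type) (le : I → I → Prop) (xi : I → X) (x : X), IsNetOrder le →
        GSI2Conv le xi x → x ∈ U → ∃ i₀, ∀ i, le i₀ i → xi i ∈ U := by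
  constructor
  · rintro ⟨hUopen, hUirr⟩ I le xi x hnet hconv hxU
    obtain ⟨𝒢, hGfin, hGirr, hGconv, hGint⟩ := hconv
    apply hGconv U hUopen
    by_contra hno
    push_neg at hno
    have hmeet : ∀ K ∈ {K : SmythPS X | ∃ G ∈ 𝒢, K.1 = upClosure G}, (K.1 ∩ Uᶜ).Nonempty := by
      rintro K ⟨G, hG, hKG⟩
      rw [hKG]
      rcases Set.not_subset.1 (hno G hG) with ⟨y, hy1, hy2⟩
      exact ⟨y, hy1, hy2⟩
    obtain ⟨B, hBA, hBirr, hBmeet⟩ := rudin' hGirr (isClosed_compl_iff.2 hUopen) hmeet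
    have hxcut : x ∈ cutD B := by
      intro u hu
      have hu𝒢 : u ∈ ⋂ G ∈ 𝒢, upClosure G := by
        refine Set.mem_iInter₂.2 fun G hG => ?_
        obtain ⟨y, hyK, hyB⟩ := hBmeet (mkK G (hGfin G hG).1 (hGfin G hG).2) ⟨G, hG, rfl⟩
        obtain ⟨g, hg, hgy⟩ := hyK
        exact ⟨g, hg, specLE_trans' hgy (hu y hyB)⟩
      obtain ⟨b, hb, hbu⟩ := hGint hu𝒢
      rwa [Set.mem_singleton_iff.1 hb] at hbu
    obtain ⟨y, hyB, hyU⟩ := hUirr B hBirr ⟨x, hxcut, hxU⟩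
    exact hBA hyB hyU
  · intro hyp
    constructor
    · rw [isOpen_iff_mem_nhds]
      intro x hxU
      by_contra hnb
      have hne : ∀ V : Set X, IsOpen V → x ∈ V → (V \ U).Nonempty := by
        intro V hV hxV
        rcases (V \ U).eq_empty_or_nonempty with he | h
        · rw [Set.diff_eq_empty] at he
          exact absurd (mem_nhds_iff.2 ⟨V, he, hV, hxV⟩) hnb
        · exact h
      let I : Type := {V : Set X // IsOpen V ∧ x ∈ V}
      let le : I → I → Prop := fun V W => W.1 ⊆ V.1
      let xi : I → X := fun V => (hne V.1 V.2.1 V.2.2).choose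
      have hxi : ∀ V : I, xi V ∈ V.1 \ U := fun V => (hne V.1 V.2.1 V.2.2).choose_spec
      have hnet : IsNetOrder le :=
        ⟨⟨⟨Set.univ, isOpen_univ, Set.mem_univ x⟩⟩,
         fun i => subset_rfl, fun i j k hij hjk => hjk.trans hij,
         fun i j => ⟨⟨i.1 ∩ j.1, i.2.1.inter j.2.1, ⟨i.2.2, j.2.2⟩⟩,
           Set.inter_subset_left, Set.inter_subset_right⟩⟩
      have hconv : GSI2Conv le xi x := by
        refine ⟨{({x} : Set X)}, ?_, ?_, ?_, ?_⟩
        · intro G hG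
          rw [Set.mem_singleton_iff] at hG
          subst hG
          exact ⟨Set.finite_singleton x, Set.singleton_nonempty x⟩
        · have h : {K : SmythPS X | ∃ G ∈ ({({x} : Set X)} : Set (Set X)), K.1 = upClosure G}
              = {etaPS x} := by
            ext K
            simp only [Set.mem_singleton_iff, Set.mem_setOf_eq, exists_eq_left]
            exact ⟨fun h => Subtype.ext h, fun h => by rw [h]; rfl⟩
          rw [h]
          exact isIrreducible_singleton
        · rintro W hW ⟨G, hG, hGW⟩
          rw [Set.mem_singleton_iff] at hG
          subst hG
          have hxW : x ∈ W := hGW (subset_upClosure' _ rfl)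
          exact ⟨⟨W, hW, hxW⟩, fun V hV => hV (hxi V).1⟩
        · simp
      obtain ⟨i₀, hi₀⟩ := hyp I le xi x hnet hconv hxU
      exact (hxi i₀).2 (hi₀ i₀ subset_rfl)
    · intro F hF hcut
      obtain ⟨x, hxc, hxU⟩ := hcut
      let I : Type := {V : Set X // IsOpen V ∧ (F ∩ V).Nonempty}
      let le : I → I → Prop := fun V W => W.1 ⊆ V.1
      let xi : I → X := fun V => V.2.2.choose
      have hxi : ∀ V : I, xi V ∈ F ∩ V.1 := fun V => V.2.2.choose_spec
      have hnet : IsNetOrder le :=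
        ⟨⟨⟨Set.univ, isOpen_univ, by simpa using hF.1⟩⟩,
         fun i => subset_rfl, fun i j k hij hjk => hjk.trans hij,
         fun i j => ⟨⟨i.1 ∩ j.1, i.2.1.inter j.2.1,
           hF.2 i.1 j.1 i.2.1 j.2.1 i.2.2 j.2.2⟩,
           Set.inter_subset_left, Set.inter_subset_right⟩⟩
      have hconv : GSI2Conv le xi x := by
        refine ⟨(fun a => ({a} : Set X)) '' F, ?_, ?_, ?_, ?_⟩
        · rintro G ⟨a, ha, rfl⟩
          exact ⟨Set.finite_singleton a, Set.singleton_nonempty a⟩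
        · have h : {K : SmythPS X | ∃ G ∈ (fun a => ({a} : Set X)) '' F, K.1 = upClosure G}
              = etaPS '' F := by
            ext K
            constructor
            · rintro ⟨G, ⟨a, ha, rfl⟩, hK⟩
              exact ⟨a, ha, (Subtype.ext hK).symm⟩
            · rintro ⟨a, ha, rfl⟩
              exact ⟨{a}, ⟨a, ha, rfl⟩, rfl⟩
          rw [h]
          exact hF.image etaPS continuous_etaPS.continuousOn
        · rintro W hW ⟨G, ⟨a, ha, rfl⟩, hGW⟩
          have haW : a ∈ W := hGW (subset_upClosure' _ rfl)
          refine ⟨⟨W, hW, ⟨a, ha, haW⟩⟩, fun V hV => hV (hxi V).2⟩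
        · intro u hu
          have hub : ∀ a ∈ F, specLE a u := by
            intro a ha
            have := Set.mem_iInter₂.1 hu ({a} : Set X) ⟨a, ha, rfl⟩
            obtain ⟨b, hb, hbu⟩ := this
            rwa [Set.mem_singleton_iff.1 hb] at hbu
          exact ⟨x, rfl, hxc u hub⟩
      obtain ⟨i₀, hi₀⟩ := hyp I le xi x hnet hconv hxU
      exact ⟨xi i₀, (hxi i₀).1, hi₀ i₀ subset_rfl⟩
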